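/- The map Φ transforms the conic product into the parameter product: for all (x₁,y₁), (x₂,y₂) ∈ C_K, Φ((x₁,y₁) ⊙ (x₂,y₂)) = Φ(x₁,y₁) ⊙_P Φ(x₂,y₂). -/

import Mathlib

/-- The conic `C_K = {(x,y) ∈ K × K : x² + Hxy − Dy² = 1}`. -/
def conic {K : Type*} [Field K] (H D : K) : Set (K × K) :=
  {P | P.1 ^ 2 + H * P.1 * P.2 - D * P.2 ^ 2 = 1}

/-- The conic product `(x₁,y₁) ⊙ (x₂,y₂) = (x₁x₂ + D y₁y₂, y₁x₂ + x₁y₂ + H y₁y₂)`. -/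
def conicMul {K : Type*} [Field K] (H D : K) (P Q : K × K) : K × K :=
  (P.1 * Q.1 + D * P.2 * Q.2, P.2 * Q.1 + P.1 * Q.2 + H * P.2 * Q.2)

open scoped Classical

/-- The parametrization map `Φ : C_K → P_K`, where `P_K = K ∪ {α}` is realized as
`Option K` with `α = none`: `Φ(x,y) = (1+x)/y` if `y ≠ 0`, `Φ(1,0) = α`,
`Φ(−1,0) = −H/2`. -/
noncomputable def conicPhi {K : Type*} [Field K] (H : K) (P : K × K) : Option K :=
  if P.2 = 0 then (if P.1 = 1 then none else some (-H / 2))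
  else some ((1 + P.1) / P.2)

/-- The parameter product `⊙_P` on `P_K = K ∪ {α}`: for `a, b ∈ K`,
`a ⊙_P b = (D + ab)/(H + a + b)` if `a + b ≠ −H`, `a ⊙_P b = α` if `a + b = −H`;
and `α` acts as identity. -/
noncomputable def paramMul {K : Type*} [Field K] (H D : K) : Option K → Option K → Option K
  | none, b => b
  | a, none => a
  | some a, some b => if a + b = -H then none else some ((D + a * b) / (H + a + b))

private lemma paramMul_none_left {K : Type*} [Field K] (H D : K) (b : Option K) :
    paramMul H D none b = b := by cases b <;> rfl

private lemma paramMul_none_right {K : Type*} [Field K] (H D : K) (a : Option K) :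
    paramMul H D a none = a := by cases a <;> rfl

private lemma aux_ne {K : Type*} [Field K] {H D x y : K}
    (h2 : (2 : K) ≠ 0)
    (hirr : ∀ t : K, t ^ 2 - H * t - D ≠ 0)
    (hp : x ^ 2 + H * x * y - D * y ^ 2 = 1) (hy : y ≠ 0) :
    2 * (1 + x) + H * y ≠ 0 := by
  intro h
  apply hirr (H / 2)
  have key : y ^ 2 * (H ^ 2 + 4 * D) = 0 := by
    linear_combination (-4 : K) * hp + (2 * (x - 1) + H * y) * h
  have hD : H ^ 2 + 4 * D = 0 := by
    rcases mul_eq_zero.mp key with h' | h'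
    · exact absurd h' (pow_ne_zero 2 hy)
    · exact h'
  field_simp [h2]
  linear_combination (-1 : K) * hD

/-- the map `Φ` transforms the conic product into the parameter
product: for all `(x₁,y₁), (x₂,y₂) ∈ C_K`,
`Φ((x₁,y₁) ⊙ (x₂,y₂)) = Φ(x₁,y₁) ⊙_P Φ(x₂,y₂)`. -/
theorem phi_mul {K : Type*} [Field K] (H D : K)
    (h2 : (2 : K) ≠ 0)
    (hirr : ∀ t : K, t ^ 2 - H * t - D ≠ 0) :
    ∀ P ∈ conic H D, ∀ Q ∈ conic H D,
      conicPhi H (conicMul H D P Q) = paramMul H D (conicPhi H P) (conicPhi H Q) := by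
  have hne : (-1 : K) ≠ 1 := fun h => h2 (by linear_combination -h)
  rintro ⟨x₁, y₁⟩ hp ⟨x₂, y₂⟩ hq
  simp only [conic, Set.mem_setOf_eq] at hp hq
  by_cases hy₁ : y₁ = 0
  · subst hy₁
    have hx₁ : (x₁ - 1) * (x₁ + 1) = 0 := by linear_combination hp
    rcases mul_eq_zero.mp hx₁ with h1 | h1
    · -- x₁ = 1: identity
      have hx : x₁ = 1 := by linear_combination h1
      subst hx
      have hM : conicMul H D (1, 0) (x₂, y₂) = (x₂, y₂) := by
        simp only [conicMul, Prod.mk.injEq]; constructor <;> ring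
      have hP : conicPhi H ((1 : K), (0 : K)) = none := by simp [conicPhi]
      rw [hM, hP, paramMul_none_left]
    · -- x₁ = -1
      have hx : x₁ = -1 := by linear_combination h1
      subst hx
      have hM : conicMul H D (-1, 0) (x₂, y₂) = (-x₂, -y₂) := by
        simp only [conicMul, Prod.mk.injEq]; constructor <;> ring
      have hP : conicPhi H ((-1 : K), (0 : K)) = some (-H / 2) := by
        simp [conicPhi, hne]
      rw [hM, hP]
      by_cases hy₂ : y₂ = 0
      · subst hy₂
        have hx₂ : (x₂ - 1) * (x₂ + 1) = 0 := by linear_combination hq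
        rcases mul_eq_zero.mp hx₂ with h1 | h1
        · have hx : x₂ = 1 := by linear_combination h1
          subst hx
          have h1' : ((-1 : K), (-0 : K)) = ((-1 : K), (0 : K)) := by norm_num
          rw [h1', hP]
          have hQ : conicPhi H ((1 : K), (0 : K)) = none := by simp [conicPhi]
          rw [hQ, paramMul_none_right]
        · have hx : x₂ = -1 := by linear_combination h1
          subst hx
          have h1' : ((-(-1) : K), (-0 : K)) = ((1 : K), (0 : K)) := by norm_num
          rw [h1', hP]
          have hQ : conicPhi H ((1 : K), (0 : K)) = none := by simp [conicPhi]
          rw [hQ]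
          show none = if (-H / 2 + -H / 2 = -H) then none else _
          rw [if_pos (by field_simp [h2]; ring)]
      · have hQ : conicPhi H (x₂, y₂) = some ((1 + x₂) / y₂) := by
          simp [conicPhi, hy₂]
        rw [hQ]
        have hR : conicPhi H (-x₂, -y₂) = some ((1 + -x₂) / -y₂) := by
          simp [conicPhi, hy₂]
        rw [hR]
        show some _ = if (-H / 2 + (1 + x₂) / y₂ = -H) then none else _
        have haux := aux_ne h2 hirr hq hy₂
        have hcc : ¬(-H / 2 + (1 + x₂) / y₂ = -H) := by
          intro hc
          apply haux
          field_simp [h2] at hc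
          linear_combination hc
        rw [if_neg hcc]
        have hDn : H + -H / 2 + (1 + x₂) / y₂ ≠ 0 := fun h => hcc (by linear_combination h)
        rw [Option.some_inj, eq_div_iff hDn]
        field_simp [h2]
        linear_combination (2 : K) * hq
  · by_cases hy₂ : y₂ = 0
    · subst hy₂
      have hx₂ : (x₂ - 1) * (x₂ + 1) = 0 := by linear_combination hq
      have hP : conicPhi H (x₁, y₁) = some ((1 + x₁) / y₁) := by
        simp [conicPhi, hy₁]
      rcases mul_eq_zero.mp hx₂ with h1 | h1
      · have hx : x₂ = 1 := by linear_combination h1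
        subst hx
        have hM : conicMul H D (x₁, y₁) (1, 0) = (x₁, y₁) := by
          simp only [conicMul, Prod.mk.injEq]; constructor <;> ring
        have hQ : conicPhi H ((1 : K), (0 : K)) = none := by simp [conicPhi]
        rw [hM, hQ, paramMul_none_right]
      · have hx : x₂ = -1 := by linear_combination h1
        subst hx
        have hM : conicMul H D (x₁, y₁) (-1, 0) = (-x₁, -y₁) := by
          simp only [conicMul, Prod.mk.injEq]; constructor <;> ring
        have hQ : conicPhi H ((-1 : K), (0 : K)) = some (-H / 2) := by
          simp [conicPhi, hne]
        rw [hM, hQ, hP]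
        have hR : conicPhi H (-x₁, -y₁) = some ((1 + -x₁) / -y₁) := by
          simp [conicPhi, hy₁]
        rw [hR]
        show some _ = if ((1 + x₁) / y₁ + -H / 2 = -H) then none else _
        have haux := aux_ne h2 hirr hp hy₁
        have hcc : ¬((1 + x₁) / y₁ + -H / 2 = -H) := by
          intro hc
          apply haux
          field_simp [h2] at hc
          linear_combination hc
        rw [if_neg hcc]
        have hDn : H + (1 + x₁) / y₁ + -H / 2 ≠ 0 := fun h => hcc (by linear_combination h)
        rw [Option.some_inj, eq_div_iff hDn]
        field_simp [h2]
        linear_combination (2 : K) * hp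
    · -- main case: y₁ ≠ 0, y₂ ≠ 0
      have hP : conicPhi H (x₁, y₁) = some ((1 + x₁) / y₁) := by
        simp [conicPhi, hy₁]
      have hQ : conicPhi H (x₂, y₂) = some ((1 + x₂) / y₂) := by
        simp [conicPhi, hy₂]
      rw [hP, hQ]
      simp only [conicMul]
      by_cases hY : y₁ * x₂ + x₁ * y₂ + H * y₁ * y₂ = 0
      · -- product has second coordinate 0
        have hsq : y₂ ^ 2 = y₁ ^ 2 := by
          linear_combination (x₁ * y₂ - x₂ * y₁) * hY - y₂ ^ 2 * hp + y₁ ^ 2 * hq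
        have hfac : (y₂ - y₁) * (y₂ + y₁) = 0 := by linear_combination hsq
        by_cases hyy : y₂ = y₁
        · -- y₂ = y₁ : product = (-1,0)
          subst hyy
          have hx2 : x₂ = -x₁ - H * y₂ := by
            have h0 : y₂ * (x₂ + x₁ + H * y₂) = 0 := by linear_combination hY
            rcases mul_eq_zero.mp h0 with h | h
            · exact absurd h hy₂
            · linear_combination h
          subst hx2
          have hpair : ((x₁ * (-x₁ - H * y₂) + D * y₂ * y₂ : K),
              (y₂ * (-x₁ - H * y₂) + x₁ * y₂ + H * y₂ * y₂ : K)) = ((-1 : K), (0 : K)) := by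
            rw [Prod.mk.injEq]
            constructor
            · linear_combination -hp
            · ring
          rw [hpair]
          have hR : conicPhi H ((-1 : K), (0 : K)) = some (-H / 2) := by
            simp [conicPhi, hne]
          rw [hR]
          show some _ = if ((1 + x₁) / y₂ + (1 + (-x₁ - H * y₂)) / y₂ = -H) then none else _
          have hcc : ¬((1 + x₁) / y₂ + (1 + (-x₁ - H * y₂)) / y₂ = -H) := by
            intro hc
            apply h2
            field_simp at hc
            linear_combination hc
          rw [if_neg hcc]
          have hDn : H + (1 + x₁) / y₂ + (1 + (-x₁ - H * y₂)) / y₂ ≠ 0 :=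
            fun h => hcc (by linear_combination h)
          rw [Option.some_inj, eq_div_iff hDn]
          field_simp [h2]
          linear_combination (2 : K) * hp
        · -- y₂ = -y₁ : product = (1,0)
          have hyy' : y₂ = -y₁ := by
            rcases mul_eq_zero.mp hfac with h | h
            · exact absurd (by linear_combination h) hyy
            · linear_combination h
          subst hyy'
          have hx2 : x₂ = x₁ + H * y₁ := by
            have h0 : y₁ * (x₂ - x₁ - H * y₁) = 0 := by linear_combination hY
            rcases mul_eq_zero.mp h0 with h | h
            · exact absurd h hy₁
            · linear_combination h
          subst hx2
          have hpair : ((x₁ * (x₁ + H * y₁) + D * y₁ * -y₁ : K),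
              (y₁ * (x₁ + H * y₁) + x₁ * -y₁ + H * y₁ * -y₁ : K)) = ((1 : K), (0 : K)) := by
            rw [Prod.mk.injEq]
            constructor
            · linear_combination hp
            · ring
          rw [hpair]
          have hR : conicPhi H ((1 : K), (0 : K)) = none := by simp [conicPhi]
          rw [hR]
          show none = if ((1 + x₁) / y₁ + (1 + (x₁ + H * y₁)) / -y₁ = -H) then none else _
          rw [if_pos (by field_simp; ring)]
      · -- product has second coordinate ≠ 0
        have hR : conicPhi H ((x₁ * x₂ + D * y₁ * y₂ : K),
            (y₁ * x₂ + x₁ * y₂ + H * y₁ * y₂ : K))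
            = some ((1 + (x₁ * x₂ + D * y₁ * y₂)) / (y₁ * x₂ + x₁ * y₂ + H * y₁ * y₂)) := by
          simp [conicPhi, hY]
        rw [hR]
        by_cases hab : (1 + x₁) / y₁ + (1 + x₂) / y₂ = -H
        · exfalso
          have e : (1 + x₁) * y₂ + (1 + x₂) * y₁ + H * (y₁ * y₂) = 0 := by
            field_simp at hab
            linear_combination hab
          have key : y₂ * (2 * (1 + x₁) + H * y₁) * (y₁ + y₂) = 0 := by
            linear_combination (-(y₂ ^ 2)) * hp + y₁ ^ 2 * hq + (y₁ + y₂ + x₁ * y₂ - x₂ * y₁) * e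
          have h1 := aux_ne h2 hirr hp hy₁
          have hsum : y₁ + y₂ = 0 := by
            rcases mul_eq_zero.mp key with h | h
            · rcases mul_eq_zero.mp h with h' | h'
              · exact absurd h' hy₂
              · exact absurd h' h1
            · exact h
          exact hY (by linear_combination e - hsum)
        · show some _ = if ((1 + x₁) / y₁ + (1 + x₂) / y₂ = -H) then none else _
          rw [if_neg hab]
          have hDn : H + (1 + x₁) / y₁ + (1 + x₂) / y₂ ≠ 0 :=
            fun h => hab (by linear_combination h)
          rw [Option.some_inj, eq_div_iff hDn]
          rw [div_mul_eq_mul_div, div_eq_iff hY]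
          field_simp
          linear_combination (-y₂) * hp + (-y₁) * hq
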